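/- Let ℓ ∈ {3,4} and let q ≥ 2 be an integer. Suppose that for every J > 0 there are real numbers E, N > 0, positive integers K₁ ≤ K₂, and indices n₁ < n₂ ∈ ℕ which are both mild gap points for f_{ℓ,ℓ} with gap-length ≥ K₁ and K₁-tail-norm ≤ E, such that: (i) n₁ + K₁ < n₂ and n₂ + K₂ ≤ N; (ii) r_{ℓ,ℓ−1}(n) = 0 for all n with n₁ ≤ n < n₂ + K₂; (iii) there exists n₃ with n₁ ≤ n₃ < n₂ and r_{ℓ,ℓ}(n₃) > 0; (iv) q^{K₁} > J·E and q^{K₂} > J·N. Then θ_ℓ(q) is not a root of any nonzero polynomial with integer coefficients of degree at most ℓ. -/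

import Mathlib

/-- `r ℓ s n` is the number of `s`-tuples `(n₁,…,n_s) ∈ ℕ^s` with
`n₁^ℓ + ⋯ + n_s^ℓ = n`. -/
noncomputable def r (ℓ s n : ℕ) : ℕ := Nat.card {v : Fin s → ℕ // ∑ i, (v i) ^ ℓ = n}

/-- `n` is a mild gap point for the series with coefficients `a`, with
gap-length `≥ K` and `K`-tail-norm `≤ E`. -/
def IsMildGapPoint (a : ℕ → ℤ) (K : ℕ) (E : ℝ) (n : ℕ) : Prop :=
  (∀ k < K, a (n + k) = 0) ∧
    ∑' i : ℕ, |(a (n + K + i) : ℝ)| * (1 / 2 : ℝ) ^ i ≤ E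

lemma coord_le {ℓ s n : ℕ} (hℓ : ℓ ≠ 0) (v : Fin s → ℕ)
    (hv : ∑ i, v i ^ ℓ = n) (i : Fin s) : v i ≤ n :=
  calc v i ≤ v i ^ ℓ := Nat.le_self_pow hℓ _
  _ ≤ ∑ j, v j ^ ℓ := Finset.single_le_sum (f := fun j => v j ^ ℓ) (fun j _ => Nat.zero_le _) (Finset.mem_univ i)
  _ = n := hv

lemma fiber_finite {ℓ : ℕ} (hℓ : ℓ ≠ 0) (s n : ℕ) :
    Finite {v : Fin s → ℕ // ∑ i, (v i) ^ ℓ = n} := by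
  apply Finite.of_injective
    (fun v => (fun i => (⟨v.1 i, Nat.lt_succ_of_le (coord_le hℓ v.1 v.2 i)⟩ : Fin (n+1))))
  intro v w h
  ext i
  exact congrArg Fin.val (congrFun h i)

lemma r_le {ℓ : ℕ} (hℓ : ℓ ≠ 0) (s n : ℕ) : r ℓ s n ≤ (n + 1) ^ s := by
  have h := Nat.card_le_card_of_injective
    (fun v : {v : Fin s → ℕ // ∑ i, (v i) ^ ℓ = n} =>
      (fun i => (⟨v.1 i, Nat.lt_succ_of_le (coord_le hℓ v.1 v.2 i)⟩ : Fin (n+1))))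
    (by intro v w h; ext i; exact congrArg Fin.val (congrFun h i))
  calc r ℓ s n ≤ Nat.card (Fin s → Fin (n+1)) := h
  _ = (n+1)^s := by simp [Nat.card_eq_fintype_card]

lemma r_succ_mono {ℓ : ℕ} (hℓ : ℓ ≠ 0) (s n : ℕ) : r ℓ s n ≤ r ℓ (s + 1) n := by
  have := fiber_finite hℓ (s+1) n
  apply Nat.card_le_card_of_injective
    (fun v : {v : Fin s → ℕ // ∑ i, (v i) ^ ℓ = n} =>
      (⟨Fin.snoc v.1 0, by
        rw [Fin.sum_univ_castSucc]
        simp [Fin.snoc_castSucc, hℓ, v.2]⟩ : {v : Fin (s+1) → ℕ // ∑ i, (v i) ^ ℓ = n}))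
  intro v w h
  ext i
  have := congrFun (congrArg Subtype.val h) (Fin.castSucc i)
  simpa [Fin.snoc_castSucc] using this

lemma r_mono {ℓ : ℕ} (hℓ : ℓ ≠ 0) {s t : ℕ} (hst : s ≤ t) (n : ℕ) : r ℓ s n ≤ r ℓ t n := by
  induction t with
  | zero => simp [Nat.le_zero.mp hst]
  | succ t ih =>
    rcases Nat.lt_or_ge s (t+1) with h | h
    · exact le_trans (ih (by omega)) (r_succ_mono hℓ t n)
    · have : s = t+1 := by omega
      simp [this]

lemma r_zero_pos {ℓ : ℕ} (hℓ : ℓ ≠ 0) (s : ℕ) : 0 < r ℓ s 0 := by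
  have h1 := fiber_finite hℓ s 0
  have h2 : Nonempty {v : Fin s → ℕ // ∑ i, (v i) ^ ℓ = 0} :=
    ⟨⟨fun _ => 0, by simp [hℓ]⟩⟩
  exact Nat.card_pos_iff.2 ⟨h2, h1⟩



section series
variable {x : ℝ} (hx0 : 0 ≤ x) (hx1 : x < 1) {ℓ : ℕ} (hℓ : ℓ ≠ 0)

include hx0 hx1 hℓ

lemma summable_g : Summable (fun n : ℕ => x ^ (n ^ ℓ)) := by
  refine Summable.of_nonneg_of_le (fun n => pow_nonneg hx0 _)
    (fun n => pow_le_pow_of_le_one hx0 hx1.le (Nat.le_self_pow hℓ n))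
    (summable_geometric_of_lt_one hx0 hx1)

lemma prod_summable_tsum (s : ℕ) :
    Summable (fun v : Fin s → ℕ => x ^ (∑ i, (v i) ^ ℓ)) ∧
      (∑' v : Fin s → ℕ, x ^ (∑ i, (v i) ^ ℓ)) = (∑' n : ℕ, x ^ (n ^ ℓ)) ^ s := by
  induction s with
  | zero =>
    constructor
    · exact (hasSum_fintype _).summable
    · rw [tsum_eq_single (default : Fin 0 → ℕ)
        (fun b' hb' => absurd (Subsingleton.elim b' default) hb')]
      simp
  | succ s ih =>
    have key : ∀ p : ℕ × (Fin s → ℕ),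
        x ^ (∑ i, ((Fin.consEquiv (fun _ => ℕ)) p i) ^ ℓ)
          = x ^ (p.1 ^ ℓ) * x ^ (∑ i, (p.2 i) ^ ℓ) := by
      intro p
      rw [Fin.sum_univ_succ, pow_add]
      simp
    have hsum2 : Summable (fun p : ℕ × (Fin s → ℕ) =>
        x ^ (p.1 ^ ℓ) * x ^ (∑ i, (p.2 i) ^ ℓ)) := by
      apply Summable.mul_of_nonneg (summable_g hx0 hx1 hℓ) ih.1
        (fun n => pow_nonneg hx0 _) (fun v => pow_nonneg hx0 _)
    constructor
    · rw [← (Fin.consEquiv (fun _ => ℕ)).summable_iff]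
      exact hsum2.congr fun p => (key p).symm
    · rw [← (Fin.consEquiv (fun _ => ℕ)).tsum_eq
        (fun v : Fin (s+1) → ℕ => x ^ (∑ i, (v i) ^ ℓ))]
      calc (∑' p : ℕ × (Fin s → ℕ), x ^ (∑ i, ((Fin.consEquiv (fun _ => ℕ)) p i) ^ ℓ))
          = ∑' p : ℕ × (Fin s → ℕ), x ^ (p.1 ^ ℓ) * x ^ (∑ i, (p.2 i) ^ ℓ) :=
            tsum_congr key
        _ = (∑' n : ℕ, x ^ (n ^ ℓ)) * ∑' v : Fin s → ℕ, x ^ (∑ i, (v i) ^ ℓ) :=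
            (Summable.tsum_mul_tsum (summable_g hx0 hx1 hℓ) ih.1 hsum2).symm
        _ = (∑' n : ℕ, x ^ (n ^ ℓ)) ^ (s + 1) := by rw [ih.2, pow_succ, mul_comm]

lemma r_summable_tsum (s : ℕ) :
    Summable (fun n : ℕ => (r ℓ s n : ℝ) * x ^ n) ∧
      (∑' n : ℕ, (r ℓ s n : ℝ) * x ^ n) = (∑' n : ℕ, x ^ (n ^ ℓ)) ^ s := by
  classical
  set g : (Fin s → ℕ) → ℕ := fun v => ∑ i, (v i) ^ ℓ with hg
  have hFe : ∀ p : Σ n : ℕ, {v : Fin s → ℕ // g v = n},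
      x ^ g ((Equiv.sigmaFiberEquiv g) p) = x ^ p.1 := by
    rintro ⟨n, v, hv⟩
    show x ^ g v = x ^ n
    rw [hv]
  have hs : Summable (fun p : Σ n : ℕ, {v : Fin s → ℕ // g v = n} => x ^ p.1) := by
    have h1 := ((Equiv.sigmaFiberEquiv g).summable_iff
      (f := fun v : Fin s → ℕ => x ^ g v)).mpr ((prod_summable_tsum hx0 hx1 hℓ s).1)
    exact h1.congr hFe
  have hfin : ∀ n, Finite {v : Fin s → ℕ // g v = n} := fun n => fiber_finite hℓ s n
  have hinner : ∀ n : ℕ, (∑' _ : {v : Fin s → ℕ // g v = n}, x ^ n)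
      = (r ℓ s n : ℝ) * x ^ n := by
    intro n
    have := hfin n
    have hft := Fintype.ofFinite {v : Fin s → ℕ // g v = n}
    rw [tsum_fintype, Finset.sum_const, Finset.card_univ, nsmul_eq_mul]
    congr 2
    rw [r, Nat.card_eq_fintype_card]
  constructor
  · exact hs.sigma.congr (fun n => by rw [← hinner n])
  · calc (∑' n : ℕ, (r ℓ s n : ℝ) * x ^ n)
        = ∑' n : ℕ, ∑' _ : {v : Fin s → ℕ // g v = n}, x ^ n :=
          tsum_congr fun n => (hinner n).symm
      _ = ∑' p : Σ n : ℕ, {v : Fin s → ℕ // g v = n}, x ^ p.1 := (Summable.tsum_sigma hs).symm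
      _ = ∑' p : Σ n : ℕ, {v : Fin s → ℕ // g v = n},
            x ^ g ((Equiv.sigmaFiberEquiv g) p) := tsum_congr fun p => (hFe p).symm
      _ = ∑' v : Fin s → ℕ, x ^ g v :=
          (Equiv.sigmaFiberEquiv g).tsum_eq (fun v : Fin s → ℕ => x ^ g v)
      _ = (∑' n : ℕ, x ^ (n ^ ℓ)) ^ s := (prod_summable_tsum hx0 hx1 hℓ s).2

omit hx0 in
lemma summable_r_shift (hx0' : 0 < x) (m : ℕ) :
    Summable (fun i : ℕ => (r ℓ ℓ (m + i) : ℝ) * x ^ i) := by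
  have hbig : Summable (fun i : ℕ => ((m + 1 : ℝ)) ^ ℓ * ((i + 1 : ℝ) ^ ℓ * x ^ i)) := by
    apply Summable.mul_left
    have h1 : Summable (fun i : ℕ => ((i : ℝ)) ^ ℓ * x ^ i) :=
      summable_pow_mul_geometric_of_norm_lt_one ℓ
        (by rwa [Real.norm_eq_abs, abs_of_nonneg hx0'.le])
    have h2 := (summable_nat_add_iff 1).mpr h1
    have h3 := h2.mul_left x⁻¹
    refine h3.congr fun i => ?_
    push_cast
    rw [pow_succ]
    field_simp
  refine Summable.of_nonneg_of_le (fun i => by positivity) (fun i => ?_) hbig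
  have hr : (r ℓ ℓ (m + i) : ℝ) ≤ ((m + 1 : ℝ)) ^ ℓ * (i + 1 : ℝ) ^ ℓ := by
    have h1 : r ℓ ℓ (m + i) ≤ (m + i + 1) ^ ℓ := r_le hℓ ℓ (m + i)
    have h2 : (m + i + 1) ^ ℓ ≤ ((m + 1) * (i + 1)) ^ ℓ :=
      Nat.pow_le_pow_left (by nlinarith) ℓ
    calc (r ℓ ℓ (m + i) : ℝ) ≤ (((m + 1) * (i + 1)) ^ ℓ : ℕ) := by exact_mod_cast h1.trans h2
    _ = ((m + 1 : ℝ)) ^ ℓ * (i + 1 : ℝ) ^ ℓ := by push_cast; rw [← mul_pow]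
  calc (r ℓ ℓ (m + i) : ℝ) * x ^ i ≤ (((m + 1 : ℝ)) ^ ℓ * (i + 1 : ℝ) ^ ℓ) * x ^ i :=
        mul_le_mul_of_nonneg_right hr (by positivity)
  _ = ((m + 1 : ℝ)) ^ ℓ * ((i + 1 : ℝ) ^ ℓ * x ^ i) := by ring

end series

lemma tail_bound {x : ℝ} (hx0 : 0 < x) (hx2 : x ≤ 1/2) {ℓ : ℕ} (hℓ : ℓ ≠ 0)
    {K : ℕ} {E : ℝ} {m : ℕ}
    (hgap : ∑' i : ℕ, |((r ℓ ℓ (m + K + i) : ℤ) : ℝ)| * (1/2 : ℝ) ^ i ≤ E) :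
    ∑' i : ℕ, (r ℓ ℓ (m + K + i) : ℝ) * x ^ i ≤ E := by
  have hx1 : x < 1 := lt_of_le_of_lt hx2 (by norm_num)
  have h2 : Summable (fun i : ℕ => (r ℓ ℓ (m + K + i) : ℝ) * (1/2 : ℝ) ^ i) :=
    summable_r_shift (by norm_num) hℓ (by norm_num) (m + K)
  have hx : Summable (fun i : ℕ => (r ℓ ℓ (m + K + i) : ℝ) * x ^ i) :=
    summable_r_shift hx1 hℓ hx0 (m + K)
  have hle : ∀ i : ℕ, (r ℓ ℓ (m + K + i) : ℝ) * x ^ i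
      ≤ (r ℓ ℓ (m + K + i) : ℝ) * (1/2 : ℝ) ^ i := fun i =>
    mul_le_mul_of_nonneg_left (pow_le_pow_left₀ hx0.le hx2 i) (Nat.cast_nonneg _)
  refine (Summable.tsum_le_tsum hle hx h2).trans (le_trans (le_of_eq (tsum_congr fun i => ?_)) hgap)
  rw [Int.cast_natCast, Nat.abs_cast]

/-- Criterion: nested mild gaps for `f_{ℓ,ℓ}` inside a gap of the
representations by `ℓ-1` powers force `θ_ℓ(q)` not to be a root of any
nonzero integer polynomial of degree at most `ℓ`. -/
theorem not_root_of_nested_gaps (ℓ : ℕ) (hℓ : ℓ = 3 ∨ ℓ = 4)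
    (q : ℕ) (hq : 2 ≤ q)
    (hyp : ∀ J : ℝ, 0 < J →
      ∃ E N : ℝ, 0 < E ∧ 0 < N ∧
      ∃ K₁ K₂ : ℕ, 0 < K₁ ∧ K₁ ≤ K₂ ∧
      ∃ n₁ n₂ : ℕ, n₁ < n₂ ∧
        IsMildGapPoint (fun n => (r ℓ ℓ n : ℤ)) K₁ E n₁ ∧
        IsMildGapPoint (fun n => (r ℓ ℓ n : ℤ)) K₁ E n₂ ∧
        (n₁ + K₁ < n₂ ∧ ((n₂ + K₂ : ℕ) : ℝ) ≤ N) ∧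
        (∀ n : ℕ, n₁ ≤ n → n < n₂ + K₂ → r ℓ (ℓ - 1) n = 0) ∧
        (∃ n₃ : ℕ, n₁ ≤ n₃ ∧ n₃ < n₂ ∧ 0 < r ℓ ℓ n₃) ∧
        ((q : ℝ) ^ K₁ > J * E ∧ (q : ℝ) ^ K₂ > J * N)) :
    ∀ P : Polynomial ℤ, P ≠ 0 → P.natDegree ≤ ℓ →
      Polynomial.aeval (∑' n : ℕ, (1 : ℝ) / (q : ℝ) ^ (n ^ ℓ)) P ≠ 0 := by
  intro P hP hdeg hroot
  have hℓ0 : ℓ ≠ 0 := by rcases hℓ with h | h <;> omega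
  have hq2 : (2 : ℝ) ≤ (q : ℝ) := by exact_mod_cast hq
  have hq0 : (0 : ℝ) < (q : ℝ) := by linarith
  set x : ℝ := 1 / (q : ℝ) with hxdef
  have hx0 : 0 < x := by rw [hxdef]; positivity
  have hx2 : x ≤ 1 / 2 := by
    rw [hxdef]
    exact one_div_le_one_div_of_le (by norm_num) hq2
  have hx1 : x < 1 := lt_of_le_of_lt hx2 (by norm_num)
  set θ : ℝ := ∑' n : ℕ, (1 : ℝ) / (q : ℝ) ^ (n ^ ℓ) with hθdef
  have hθx : θ = ∑' n : ℕ, x ^ (n ^ ℓ) := by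
    rw [hθdef]
    exact tsum_congr fun n => by rw [hxdef, div_pow, one_pow]
  -- the polynomial with full degree ℓ
  set Q : Polynomial ℤ := Polynomial.X ^ (ℓ - P.natDegree) * P with hQdef
  have hQ0 : Q ≠ 0 := mul_ne_zero (pow_ne_zero _ Polynomial.X_ne_zero) hP
  have hQdeg : Q.natDegree = ℓ := by
    rw [hQdef, Polynomial.natDegree_mul (pow_ne_zero _ Polynomial.X_ne_zero) hP,
      Polynomial.natDegree_pow, Polynomial.natDegree_X]
    omega
  have hQl : Q.coeff ℓ ≠ 0 := by
    rw [← hQdeg]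
    exact Polynomial.leadingCoeff_ne_zero.mpr hQ0
  have hQroot : Polynomial.aeval θ Q = 0 := by
    rw [hQdef, map_mul, map_pow, Polynomial.aeval_X, hroot, mul_zero]
  set c : ℕ → ℤ := fun s => Q.coeff s with hcdef
  set C : ℝ := ∑ s ∈ Finset.range (ℓ + 1), |(c s : ℝ)| with hCdef
  have hcl1 : (1 : ℝ) ≤ |(c ℓ : ℝ)| := by
    have : 1 ≤ |c ℓ| := Int.one_le_abs hQl
    calc (1 : ℝ) ≤ (|c ℓ| : ℤ) := by exact_mod_cast this
    _ = |(c ℓ : ℝ)| := by push_cast; ring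
  have hC1 : 1 ≤ C := by
    refine hcl1.trans ?_
    exact Finset.single_le_sum (f := fun s => |(c s : ℝ)|)
      (fun s _ => abs_nonneg _) (Finset.self_mem_range_succ ℓ)
  have hC0 : 0 < C := lt_of_lt_of_le one_pos hC1
  -- the series
  have hrs : ∀ s : ℕ, Summable (fun n : ℕ => (r ℓ s n : ℝ) * x ^ n) ∧
      (∑' n : ℕ, (r ℓ s n : ℝ) * x ^ n) = θ ^ s := fun s => by
    rw [hθx]
    exact r_summable_tsum hx0.le hx1 hℓ0 s
  set F : ℕ → ℝ := fun n =>
    (∑ s ∈ Finset.range (ℓ + 1), (c s : ℝ) * (r ℓ s n : ℝ)) * x ^ n with hFdef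
  have hFeq : ∀ n : ℕ, F n
      = ∑ s ∈ Finset.range (ℓ + 1), (c s : ℝ) * ((r ℓ s n : ℝ) * x ^ n) := by
    intro n
    show (∑ s ∈ Finset.range (ℓ + 1), (c s : ℝ) * (r ℓ s n : ℝ)) * x ^ n = _
    rw [Finset.sum_mul]
    exact Finset.sum_congr rfl fun s _ => by ring
  have hFsum : Summable F := by
    have h1 : Summable (fun n : ℕ =>
        ∑ s ∈ Finset.range (ℓ + 1), (c s : ℝ) * ((r ℓ s n : ℝ) * x ^ n)) :=
      summable_sum fun s _ => ((hrs s).1).mul_left _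
    exact h1.congr fun n => (hFeq n).symm
  have hF0 : ∑' n : ℕ, F n = 0 := by
    calc ∑' n : ℕ, F n
        = ∑' n : ℕ, ∑ s ∈ Finset.range (ℓ + 1), (c s : ℝ) * ((r ℓ s n : ℝ) * x ^ n) :=
          tsum_congr hFeq
      _ = ∑ s ∈ Finset.range (ℓ + 1), ∑' n : ℕ, (c s : ℝ) * ((r ℓ s n : ℝ) * x ^ n) :=
          Summable.tsum_finsetSum fun s _ => ((hrs s).1).mul_left _
      _ = ∑ s ∈ Finset.range (ℓ + 1), (c s : ℝ) * θ ^ s := by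
          refine Finset.sum_congr rfl fun s _ => ?_
          rw [tsum_mul_left, (hrs s).2]
      _ = Polynomial.aeval θ Q := by
          rw [Polynomial.aeval_eq_sum_range (p := Q) θ, hQdeg]
          exact Finset.sum_congr rfl fun s _ => by rw [zsmul_eq_mul]
      _ = 0 := hQroot
  -- coefficient bound
  have habs : ∀ n : ℕ, |F n| ≤ C * ((r ℓ ℓ n : ℝ) * x ^ n) := by
    intro n
    have h1 : |∑ s ∈ Finset.range (ℓ + 1), (c s : ℝ) * (r ℓ s n : ℝ)|
        ≤ ∑ s ∈ Finset.range (ℓ + 1), |(c s : ℝ)| * (r ℓ ℓ n : ℝ) := by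
      refine (Finset.abs_sum_le_sum_abs _ _).trans (Finset.sum_le_sum fun s hs => ?_)
      rw [abs_mul, Nat.abs_cast]
      refine mul_le_mul_of_nonneg_left ?_ (abs_nonneg _)
      have hs' : s ≤ ℓ := by have := Finset.mem_range.mp hs; omega
      exact_mod_cast r_mono hℓ0 hs' n
    have h2 : ∑ s ∈ Finset.range (ℓ + 1), |(c s : ℝ)| * (r ℓ ℓ n : ℝ)
        = C * (r ℓ ℓ n : ℝ) := by rw [hCdef, Finset.sum_mul]
    calc |F n| = |∑ s ∈ Finset.range (ℓ + 1), (c s : ℝ) * (r ℓ s n : ℝ)| * x ^ n := by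
          rw [show F n = (∑ s ∈ Finset.range (ℓ + 1), (c s : ℝ) * (r ℓ s n : ℝ)) * x ^ n
            from rfl, abs_mul, abs_of_nonneg (pow_nonneg hx0.le n)]
      _ ≤ (C * (r ℓ ℓ n : ℝ)) * x ^ n := by
          rw [← h2]; exact mul_le_mul_of_nonneg_right h1 (pow_nonneg hx0.le n)
      _ = C * ((r ℓ ℓ n : ℝ) * x ^ n) := by ring
  -- get the gap data
  obtain ⟨E, N, hE, hN, K₁, K₂, hK₁, hK₁₂, n₁, n₂, hn12, g₁, g₂, ⟨h12, hNN⟩,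
    hvan, ⟨n₃, hn31, hn32, hr3⟩, hJ1, hJ2⟩ := hyp C hC0
  have hg1z : ∀ k, k < K₁ → r ℓ ℓ (n₁ + k) = 0 := fun k hk => by
    have := g₁.1 k hk
    simp only [Nat.cast_eq_zero] at this
    exact this
  have hg2z : ∀ k, k < K₁ → r ℓ ℓ (n₂ + k) = 0 := fun k hk => by
    have := g₂.1 k hk
    simp only [Nat.cast_eq_zero] at this
    exact this
  have hn₁pos : 1 ≤ n₁ := by
    by_contra h
    have hn10 : n₁ = 0 := by omega
    have := hg1z 0 hK₁
    rw [hn10] at this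
    exact absurd this (r_zero_pos hℓ0 ℓ).ne'
  -- middle zone
  have hmid : ∀ n : ℕ, n₁ ≤ n → n < n₂ + K₂ →
      (∑ s ∈ Finset.range (ℓ + 1), (c s : ℝ) * (r ℓ s n : ℝ))
        = (c ℓ : ℝ) * (r ℓ ℓ n : ℝ) := by
    intro n h1 h2
    refine Finset.sum_eq_single_of_mem ℓ (Finset.self_mem_range_succ ℓ) ?_
    intro s hs hsne
    have hs' : s ≤ ℓ - 1 := by
      have := Finset.mem_range.mp hs; omega
    have hz : r ℓ s n = 0 :=
      Nat.le_zero.mp ((r_mono hℓ0 hs' n).trans (le_of_eq (hvan n h1 h2)))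
    rw [hz]
    simp
  -- tail bound for mild gap points
  have htail : ∀ m K : ℕ, IsMildGapPoint (fun n => (r ℓ ℓ n : ℤ)) K E m →
      ∑' i : ℕ, (r ℓ ℓ (m + K + i) : ℝ) * x ^ i ≤ E := by
    intro m K hg
    exact tail_bound hx0 hx2 hℓ0 hg.2
  -- |tail of F| bound
  have htailF : ∀ m K : ℕ, IsMildGapPoint (fun n => (r ℓ ℓ n : ℤ)) K E m →
      ∀ d : ℕ, |∑' i : ℕ, F (i + (m + K + d))| ≤ C * E * x ^ (m + K) := by
    intro m K hg d
    set T : ℝ := ∑' i : ℕ, (r ℓ ℓ (m + K + i) : ℝ) * x ^ i with hTdef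
    have hTsum : Summable (fun i : ℕ => (r ℓ ℓ (m + K + i) : ℝ) * x ^ i) :=
      summable_r_shift hx1 hℓ0 hx0 (m + K)
    have hTle : T ≤ E := htail m K hg
    -- bound on the summands
    have hb : ∀ i : ℕ, |F (i + (m + K + d))|
        ≤ (C * x ^ (m + K)) * ((r ℓ ℓ (m + K + (d + i)) : ℝ) * x ^ (d + i)) := by
      intro i
      calc |F (i + (m + K + d))|
          ≤ C * ((r ℓ ℓ (i + (m + K + d)) : ℝ) * x ^ (i + (m + K + d))) := habs _
        _ = (C * x ^ (m + K)) * ((r ℓ ℓ (m + K + (d + i)) : ℝ) * x ^ (d + i)) := by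
            rw [show i + (m + K + d) = m + K + (d + i) by omega]
            rw [show m + K + (d + i) = (m + K) + (d + i) by omega, pow_add]
            ring
    have hsum2 : Summable (fun i : ℕ =>
        (C * x ^ (m + K)) * ((r ℓ ℓ (m + K + (d + i)) : ℝ) * x ^ (d + i))) := by
      apply Summable.mul_left
      have := (summable_nat_add_iff (f := fun i : ℕ =>
        (r ℓ ℓ (m + K + i) : ℝ) * x ^ i) d).mpr hTsum
      exact this.congr fun i => by rw [show i + d = d + i by omega]
    have hFt : Summable (fun i : ℕ => F (i + (m + K + d))) :=
      (summable_nat_add_iff (m + K + d)).mpr hFsum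
    have habs_sum : Summable (fun i : ℕ => |F (i + (m + K + d))|) :=
      Summable.of_nonneg_of_le (fun i => abs_nonneg _) hb hsum2
    have step1 : |∑' i : ℕ, F (i + (m + K + d))| ≤ ∑' i : ℕ, |F (i + (m + K + d))| := by
      have := norm_tsum_le_tsum_norm (f := fun i : ℕ => F (i + (m + K + d)))
        (by simpa [Real.norm_eq_abs] using habs_sum)
      simpa [Real.norm_eq_abs] using this
    have step2 : ∑' i : ℕ, |F (i + (m + K + d))|
        ≤ ∑' i : ℕ, (C * x ^ (m + K)) * ((r ℓ ℓ (m + K + (d + i)) : ℝ) * x ^ (d + i)) :=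
      Summable.tsum_le_tsum hb habs_sum hsum2
    have step3 : ∑' i : ℕ, (C * x ^ (m + K)) * ((r ℓ ℓ (m + K + (d + i)) : ℝ) * x ^ (d + i))
        ≤ (C * x ^ (m + K)) * T := by
      rw [tsum_mul_left]
      refine mul_le_mul_of_nonneg_left ?_ (by positivity)
      -- sub-tail of a nonneg series
      have hsub : ∑' i : ℕ, (r ℓ ℓ (m + K + (d + i)) : ℝ) * x ^ (d + i)
          = ∑' i : ℕ, (fun j : ℕ => (r ℓ ℓ (m + K + j) : ℝ) * x ^ j) (i + d) :=
        tsum_congr fun i => by rw [show i + d = d + i by omega]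
      rw [hsub, hTdef]
      have hsplit := Summable.sum_add_tsum_nat_add (f := fun j : ℕ =>
        (r ℓ ℓ (m + K + j) : ℝ) * x ^ j) d hTsum
      have hhead : 0 ≤ ∑ j ∈ Finset.range d, (r ℓ ℓ (m + K + j) : ℝ) * x ^ j :=
        Finset.sum_nonneg fun j _ => by positivity
      linarith
    calc |∑' i : ℕ, F (i + (m + K + d))| ≤ (C * x ^ (m + K)) * T :=
          step1.trans (step2.trans step3)
      _ ≤ (C * x ^ (m + K)) * E := by
          refine mul_le_mul_of_nonneg_left hTle (by positivity)
      _ = C * E * x ^ (m + K) := by ring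
  -- Step 1: the head vanishes
  have hsum1 : Summable (fun i : ℕ => F (i + n₁)) := (summable_nat_add_iff n₁).mpr hFsum
  have hsplit1 := Summable.sum_add_tsum_nat_add (f := F) n₁ hFsum
  set H : ℝ := ∑ i ∈ Finset.range n₁, F i with hHdef
  have hHT : H + ∑' i : ℕ, F (i + n₁) = 0 := by rw [hsplit1, hF0]
  have hFz : ∀ k, k < K₁ → F (n₁ + k) = 0 := by
    intro k hk
    show (∑ s ∈ Finset.range (ℓ + 1), (c s : ℝ) * (r ℓ s (n₁ + k) : ℝ)) * x ^ (n₁ + k) = 0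
    rw [hmid (n₁ + k) (by omega) (by omega), hg1z k hk]
    simp
  have htail1 : ∑' i : ℕ, F (i + n₁) = ∑' i : ℕ, F (i + (n₁ + K₁)) := by
    have h := Summable.sum_add_tsum_nat_add (f := fun i : ℕ => F (i + n₁)) K₁ hsum1
    have hz : ∑ i ∈ Finset.range K₁, F (i + n₁) = 0 :=
      Finset.sum_eq_zero fun i hi => by
        rw [show i + n₁ = n₁ + i by omega]
        exact hFz i (Finset.mem_range.mp hi)
    have hre : ∑' i : ℕ, F (i + K₁ + n₁) = ∑' i : ℕ, F (i + (n₁ + K₁)) :=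
      tsum_congr fun i => by rw [show i + K₁ + n₁ = i + (n₁ + K₁) by omega]
    rw [hz, zero_add, hre] at h
    exact h.symm
  have hHbound : |H| ≤ C * E * x ^ (n₁ + K₁) := by
    have h1 : H = - ∑' i : ℕ, F (i + (n₁ + K₁)) := by
      rw [← htail1]; linarith
    rw [h1, abs_neg]
    have h2 := htailF n₁ K₁ g₁ 0
    simpa using h2
  -- the head is a rational with denominator q ^ (n₁ - 1)
  set A : ℤ := ∑ i ∈ Finset.range n₁,
    (∑ s ∈ Finset.range (ℓ + 1), c s * (r ℓ s i : ℤ)) * (q : ℤ) ^ (n₁ - 1 - i) with hAdef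
  have hAH : (A : ℝ) = H * (q : ℝ) ^ (n₁ - 1) := by
    rw [hAdef, hHdef]
    push_cast
    rw [Finset.sum_mul]
    refine Finset.sum_congr rfl fun i hi => ?_
    have hi' : i < n₁ := Finset.mem_range.mp hi
    have key : x ^ i * (q : ℝ) ^ (n₁ - 1) = (q : ℝ) ^ (n₁ - 1 - i) := by
      rw [hxdef, div_pow, one_pow, show n₁ - 1 = (n₁ - 1 - i) + i by omega, pow_add]
      field_simp
      rw [Nat.add_sub_cancel]
    show _ = (∑ s ∈ Finset.range (ℓ + 1), (c s : ℝ) * (r ℓ s i : ℝ)) * x ^ i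
      * (q : ℝ) ^ (n₁ - 1)
    rw [mul_assoc, key]
  have hxq : x * (q : ℝ) = 1 := by
    rw [hxdef]; field_simp
  have hA0 : A = 0 := by
    have hb1 : |(A : ℝ)| ≤ C * E * x ^ (n₁ + K₁) * (q : ℝ) ^ (n₁ - 1) := by
      rw [hAH, abs_mul, abs_of_nonneg (by positivity : (0:ℝ) ≤ (q : ℝ) ^ (n₁ - 1))]
      exact mul_le_mul_of_nonneg_right hHbound (by positivity)
    have hone : x ^ (n₁ - 1) * (q : ℝ) ^ (n₁ - 1) = 1 := by
      rw [← mul_pow, hxq, one_pow]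
    have hb2 : C * E * x ^ (n₁ + K₁) * (q : ℝ) ^ (n₁ - 1) = C * E * x ^ (K₁ + 1) := by
      calc C * E * x ^ (n₁ + K₁) * (q : ℝ) ^ (n₁ - 1)
          = C * E * x ^ (K₁ + 1) * (x ^ (n₁ - 1) * (q : ℝ) ^ (n₁ - 1)) := by
            rw [show n₁ + K₁ = (K₁ + 1) + (n₁ - 1) by omega, pow_add]; ring
        _ = C * E * x ^ (K₁ + 1) := by rw [hone, mul_one]
    have hb3 : C * E * x ^ (K₁ + 1) < 1 := by
      have hpos : 0 < x ^ K₁ * x := by positivity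
      have h4 : C * E * (x ^ K₁ * x) < (q : ℝ) ^ K₁ * (x ^ K₁ * x) :=
        mul_lt_mul_of_pos_right hJ1 hpos
      have h5 : (q : ℝ) ^ K₁ * (x ^ K₁ * x) = x := by
        rw [← mul_assoc, ← mul_pow, mul_comm (q:ℝ) x, hxq, one_pow, one_mul]
      have h6 : x < 1 := hx1
      calc C * E * x ^ (K₁ + 1) = C * E * (x ^ K₁ * x) := by rw [pow_succ]
        _ < (q : ℝ) ^ K₁ * (x ^ K₁ * x) := h4
        _ = x := h5
        _ < 1 := h6
    have : |(A : ℝ)| < 1 := lt_of_le_of_lt (hb2 ▸ hb1) hb3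
    have habs' : |A| < 1 := by exact_mod_cast (by rwa [← Int.cast_abs] at this : ((|A| : ℤ) : ℝ) < 1)
    exact Int.abs_lt_one_iff.mp habs'
  have hH0 : H = 0 := by
    have hq' : (q : ℝ) ^ (n₁ - 1) ≠ 0 := by positivity
    have : H * (q : ℝ) ^ (n₁ - 1) = 0 := by rw [← hAH, hA0]; simp
    exact (mul_eq_zero.mp this).resolve_right hq'
  have htail10 : ∑' i : ℕ, F (i + n₁) = 0 := by linarith
  -- Step 2: contradiction from the inner representation point n₃
  set M : ℕ := n₂ + K₂ - n₁ with hMdef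
  have hsplit2 := Summable.sum_add_tsum_nat_add (f := fun i : ℕ => F (i + n₁)) M hsum1
  have htail2eq : ∑' i : ℕ, F (i + M + n₁) = ∑' i : ℕ, F (i + (n₂ + K₁ + (K₂ - K₁))) :=
    tsum_congr fun i => by rw [show i + M + n₁ = i + (n₂ + K₁ + (K₂ - K₁)) by omega]
  have htail2 : |∑' i : ℕ, F (i + (n₂ + K₁ + (K₂ - K₁)))| ≤ C * E * x ^ (n₂ + K₁) :=
    htailF n₂ K₁ g₂ (K₂ - K₁)
  set S : ℝ := ∑ j ∈ Finset.range M, (r ℓ ℓ (j + n₁) : ℝ) * x ^ (j + n₁) with hSdef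
  have hfin : ∑ j ∈ Finset.range M, F (j + n₁) = (c ℓ : ℝ) * S := by
    rw [hSdef, Finset.mul_sum]
    refine Finset.sum_congr rfl fun j hj => ?_
    have hj' := Finset.mem_range.mp hj
    show (∑ s ∈ Finset.range (ℓ + 1), (c s : ℝ) * (r ℓ s (j + n₁) : ℝ)) * x ^ (j + n₁) = _
    rw [hmid (j + n₁) (by omega) (by omega)]
    ring
  have hS_lb : x ^ n₂ ≤ S := by
    have hr3' : (1 : ℝ) ≤ (r ℓ ℓ n₃ : ℝ) := by exact_mod_cast hr3
    have hterm : x ^ n₂ ≤ (r ℓ ℓ ((n₃ - n₁) + n₁) : ℝ) * x ^ ((n₃ - n₁) + n₁) := by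
      rw [show (n₃ - n₁) + n₁ = n₃ by omega]
      calc x ^ n₂ ≤ x ^ n₃ :=
            pow_le_pow_of_le_one hx0.le hx1.le (by omega)
        _ ≤ (r ℓ ℓ n₃ : ℝ) * x ^ n₃ := le_mul_of_one_le_left (by positivity) hr3'
    refine hterm.trans ?_
    exact Finset.single_le_sum (f := fun j => (r ℓ ℓ (j + n₁) : ℝ) * x ^ (j + n₁))
      (fun j _ => by positivity) (Finset.mem_range.mpr (by omega))
  have h0 : (c ℓ : ℝ) * S + ∑' i : ℕ, F (i + (n₂ + K₁ + (K₂ - K₁))) = 0 := by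
    rw [← htail2eq, ← hfin]
    rw [htail10] at hsplit2
    exact hsplit2
  have hlhs : x ^ n₂ ≤ |(c ℓ : ℝ) * S| := by
    rw [abs_mul, abs_of_nonneg (le_trans (by positivity) hS_lb)]
    calc x ^ n₂ = 1 * x ^ n₂ := by ring
      _ ≤ |(c ℓ : ℝ)| * S := by
          exact mul_le_mul hcl1 hS_lb (by positivity) (abs_nonneg _)
  have hrhs : |(c ℓ : ℝ) * S| ≤ C * E * x ^ (n₂ + K₁) := by
    have : (c ℓ : ℝ) * S = - ∑' i : ℕ, F (i + (n₂ + K₁ + (K₂ - K₁))) := by linarith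
    rw [this, abs_neg]
    exact htail2
  have hfinal : C * E * x ^ (n₂ + K₁) < x ^ n₂ := by
    have hpos : 0 < x ^ K₁ := by positivity
    have h4 : C * E * x ^ K₁ < (q : ℝ) ^ K₁ * x ^ K₁ := mul_lt_mul_of_pos_right hJ1 hpos
    have h5 : (q : ℝ) ^ K₁ * x ^ K₁ = 1 := by
      rw [← mul_pow, mul_comm (q:ℝ) x, hxq, one_pow]
    have hxn2 : 0 < x ^ n₂ := by positivity
    calc C * E * x ^ (n₂ + K₁) = (C * E * x ^ K₁) * x ^ n₂ := by rw [pow_add]; ring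
      _ < 1 * x ^ n₂ := by
          refine mul_lt_mul_of_pos_right ?_ hxn2
          rw [← h5]; exact h4
      _ = x ^ n₂ := by ring
  linarith [hlhs.trans hrhs]
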